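/- Suppose Z is the disjoint union of two metric measure spaces X and Y, metrized by ρ_Z = ρ_X on X, ρ_Y on Y, and ρ_Z(x,y) = 2 for x ∈ X, y ∈ Y, where ρ_X, ρ_Y are metrics bounded by 2, and μ_Z(E) = μ_X(E∩X) + μ_Y(E∩Y) with μ_X(X), μ_Y(Y) < ∞. Then for each p ∈ [1,∞], the maximal operator on Z (centered or non-centered) is of strong (resp. weak) type (p,p) if and only if the corresponding maximal operators on both X and Y are of strong (resp. weak) type (p,p); i.e. P_s(Z) = P_s(X) ∩ P_s(Y), and similarly for P_s^c, P_w, P_w^c. -/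

import Mathlib

open MeasureTheory Metric ENNReal Filter Set

variable {α : Type*}

/-- Average of `f` over a set `s` with respect to `μ`. -/
noncomputable def ballAvg [MeasurableSpace α] (μ : Measure α)
    (s : Set α) (f : α → ℝ≥0∞) : ℝ≥0∞ :=
  (∫⁻ y in s, f y ∂μ) / μ s

/-- Centered Hardy–Littlewood maximal operator. -/
noncomputable def cenMax [MetricSpace α] [MeasurableSpace α] (μ : Measure α)
    (f : α → ℝ≥0∞) (x : α) : ℝ≥0∞ :=
  ⨆ (r : ℝ) (_ : 0 < r), ballAvg μ (Metric.ball x r) f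

/-- Non-centered Hardy–Littlewood maximal operator. -/
noncomputable def ncMax [MetricSpace α] [MeasurableSpace α] (μ : Measure α)
    (f : α → ℝ≥0∞) (x : α) : ℝ≥0∞ :=
  ⨆ (c : α) (r : ℝ) (_ : 0 < r) (_ : x ∈ Metric.ball c r), ballAvg μ (Metric.ball c r) f

/-- The `L^p` norm (with `L^∞` given by the essential supremum). -/
noncomputable def lpN [MeasurableSpace α] (μ : Measure α) (p : ℝ≥0∞) (f : α → ℝ≥0∞) : ℝ≥0∞ :=
  if p = ∞ then essSup f μ else (∫⁻ x, f x ^ p.toReal ∂μ) ^ (1 / p.toReal)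

/-- `T` is of strong type `(p,p)`. -/
def IsStrongType [MeasurableSpace α] (μ : Measure α)
    (T : (α → ℝ≥0∞) → α → ℝ≥0∞) (p : ℝ≥0∞) : Prop :=
  ∃ C : ℝ≥0∞, C ≠ ∞ ∧ ∀ f : α → ℝ≥0∞, Measurable f → lpN μ p (T f) ≤ C * lpN μ p f

/-- `T` is of weak type `(p,p)` (for `p = ∞` this means strong type `(∞,∞)`). -/
def IsWeakType [MeasurableSpace α] (μ : Measure α)
    (T : (α → ℝ≥0∞) → α → ℝ≥0∞) (p : ℝ≥0∞) : Prop :=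
  if p = ∞ then IsStrongType μ T p
  else ∃ C : ℝ≥0∞, C ≠ ∞ ∧ ∀ f : α → ℝ≥0∞, Measurable f →
    ∀ l : ℝ≥0∞, l * (μ {x | l < T f x}) ^ (1 / p.toReal) ≤ C * lpN μ p f

/-- The measure induced on a subset. -/
noncomputable def subMeasure {Z : Type*} [MeasurableSpace Z] (μ : Measure Z) (A : Set Z) :
    Measure A :=
  μ.comap Subtype.val

section Part1
variable {Z : Type*} [MeasurableSpace Z] {μ : Measure Z} {A : Set Z}

lemma MDU.sub_apply (hA : MeasurableSet A) (s : Set A) :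
    subMeasure μ A s = μ (Subtype.val '' s) :=
  (MeasurableEmbedding.subtype_coe hA).comap_apply _ _

lemma MDU.sub_preimage (hA : MeasurableSet A) (s : Set Z) :
    subMeasure μ A (Subtype.val ⁻¹' s) = μ (s ∩ A) := by
  rw [MDU.sub_apply hA, Set.image_preimage_eq_inter_range, Subtype.range_coe]

lemma MDU.sub_univ (hA : MeasurableSet A) : subMeasure μ A Set.univ = μ A := by
  rw [MDU.sub_apply hA, Set.image_univ, Subtype.range_coe]

lemma MDU.sub_zero (hA : MeasurableSet A) (h : μ A = 0) : subMeasure μ A = 0 := by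
  refine Measure.ext fun s hs => ?_
  rw [MDU.sub_apply hA]
  simp only [Measure.coe_zero, Pi.zero_apply]
  exact measure_mono_null (by rintro z ⟨x, _, rfl⟩; exact x.2) h

lemma MDU.sub_lintegral (hA : MeasurableSet A) (f : Z → ℝ≥0∞) :
    ∫⁻ x, f x ∂(subMeasure μ A) = ∫⁻ z in A, f z ∂μ := by
  rw [← map_comap_subtype_coe hA μ,
    (MeasurableEmbedding.subtype_coe hA).lintegral_map]
  rfl

lemma MDU.sub_restrict (hA : MeasurableSet A) (s : Set Z) :
    (subMeasure μ A).restrict (Subtype.val ⁻¹' s) = subMeasure (μ.restrict s) A := by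
  rw [subMeasure, subMeasure, (MeasurableEmbedding.subtype_coe hA).comap_restrict]

lemma MDU.sub_setLintegral (hA : MeasurableSet A) {s : Set Z} (hsA : s ⊆ A) (f : Z → ℝ≥0∞) :
    ∫⁻ x in Subtype.val ⁻¹' s, f ↑x ∂(subMeasure μ A) = ∫⁻ z in s, f z ∂μ := by
  rw [MDU.sub_restrict hA, MDU.sub_lintegral hA, Measure.restrict_restrict hA, Set.inter_eq_self_of_subset_right hsA]

lemma MDU.sub_ballAvg (hA : MeasurableSet A) {s : Set Z} (hsA : s ⊆ A) (f : Z → ℝ≥0∞) :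
    ballAvg (subMeasure μ A) (Subtype.val ⁻¹' s) (fun x => f ↑x) = ballAvg μ s f := by
  rw [ballAvg, ballAvg, MDU.sub_setLintegral hA hsA, MDU.sub_preimage hA,
    Set.inter_eq_self_of_subset_left hsA]

lemma MDU.ballAvg_univ_sub (hA : MeasurableSet A) (f : Z → ℝ≥0∞) :
    ballAvg (subMeasure μ A) Set.univ (fun x => f ↑x)
      = (∫⁻ z in A, f z ∂μ) / μ A := by
  rw [ballAvg, Measure.restrict_univ, MDU.sub_lintegral hA, MDU.sub_univ hA]

lemma MDU.sub_essSup_le (hA : MeasurableSet A) (f : Z → ℝ≥0∞) :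
    essSup (fun x : A => f ↑x) (subMeasure μ A) ≤ essSup f μ := by
  refine essSup_le_of_ae_le _ ?_
  have h0 : μ {z | essSup f μ < f z} = 0 := by
    simpa [ae_iff, not_le] using ENNReal.ae_le_essSup (μ := μ) f
  rw [EventuallyLE, ae_iff]
  refine measure_mono_null ?_ (show subMeasure μ A (Subtype.val ⁻¹' {z | essSup f μ < f z}) = 0
    from by rw [MDU.sub_preimage hA]; exact measure_mono_null Set.inter_subset_left h0)
  intro x hx
  simpa using hx

end Part1

set_option linter.unusedSectionVars false

section Part2
variable {Z : Type*} [MeasurableSpace Z] {μ : Measure Z} {A : Set Z} {p : ℝ≥0∞}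

lemma MDU.lpN_top {f : Z → ℝ≥0∞} : lpN μ ∞ f = essSup f μ := if_pos rfl

lemma MDU.lpN_ne_top (hp : p ≠ ∞) (f : Z → ℝ≥0∞) :
    lpN μ p f = (∫⁻ x, f x ^ p.toReal ∂μ) ^ (1 / p.toReal) := if_neg hp

lemma MDU.toReal_pos (hp1 : 1 ≤ p) (hp : p ≠ ∞) : 0 < p.toReal :=
  lt_of_lt_of_le one_pos (by simpa using ENNReal.toReal_mono hp hp1)

lemma MDU.lpN_mono (hp1 : 1 ≤ p) {f g : Z → ℝ≥0∞} (h : ∀ x, f x ≤ g x) :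
    lpN μ p f ≤ lpN μ p g := by
  by_cases hp : p = ∞
  · subst hp; rw [MDU.lpN_top, MDU.lpN_top]
    exact essSup_mono_ae (Eventually.of_forall h)
  · rw [MDU.lpN_ne_top hp, MDU.lpN_ne_top hp]
    exact ENNReal.rpow_le_rpow
      (lintegral_mono fun x => ENNReal.rpow_le_rpow (h x) (MDU.toReal_pos hp1 hp).le)
      (by positivity)

lemma MDU.lpN_const_mul (hp1 : 1 ≤ p) {c : ℝ≥0∞} (hc : c ≠ ∞) (f : Z → ℝ≥0∞) :
    lpN μ p (fun x => c * f x) ≤ c * lpN μ p f := by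
  by_cases hp : p = ∞
  · subst hp; rw [MDU.lpN_top, MDU.lpN_top, ENNReal.essSup_const_mul]
  · have he : 0 < p.toReal := MDU.toReal_pos hp1 hp
    rw [MDU.lpN_ne_top hp, MDU.lpN_ne_top hp]
    have h1 : ∀ x, (c * f x) ^ p.toReal = c ^ p.toReal * f x ^ p.toReal := fun x =>
      ENNReal.mul_rpow_of_nonneg _ _ he.le
    simp only [h1]
    rw [lintegral_const_mul' _ _ (ENNReal.rpow_ne_top_of_nonneg he.le hc),
      ENNReal.mul_rpow_of_nonneg _ _ (by positivity : (0:ℝ) ≤ 1 / p.toReal),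
      ← ENNReal.rpow_mul, mul_one_div, div_self he.ne', ENNReal.rpow_one]

lemma MDU.lpN_zero_measure (hp1 : 1 ≤ p) (f : Z → ℝ≥0∞) : lpN (0 : Measure Z) p f = 0 := by
  by_cases hp : p = ∞
  · subst hp; rw [MDU.lpN_top, essSup_measure_zero]; rfl
  · rw [MDU.lpN_ne_top hp, lintegral_zero_measure,
      ENNReal.zero_rpow_of_pos (one_div_pos.mpr (MDU.toReal_pos hp1 hp))]

lemma MDU.lpN_sub_le (hA : MeasurableSet A) (hp1 : 1 ≤ p) (f : Z → ℝ≥0∞) :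
    lpN (subMeasure μ A) p (fun x => f ↑x) ≤ lpN μ p f := by
  by_cases hp : p = ∞
  · subst hp; rw [MDU.lpN_top, MDU.lpN_top]
    exact MDU.sub_essSup_le hA f
  · rw [MDU.lpN_ne_top hp, MDU.lpN_ne_top hp]
    refine ENNReal.rpow_le_rpow ?_ (by positivity)
    exact le_trans (le_of_eq (MDU.sub_lintegral hA (fun z => f z ^ p.toReal)))
      (setLIntegral_le_lintegral _ _)

open Classical in
noncomputable def MDU.extZ (A : Set Z) (g : A → ℝ≥0∞) : Z → ℝ≥0∞ :=
  fun z => if h : z ∈ A then g ⟨z, h⟩ else 0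

lemma MDU.extZ_of_mem {z : Z} (hz : z ∈ A) (g : A → ℝ≥0∞) :
    MDU.extZ A g z = g ⟨z, hz⟩ := dif_pos hz

lemma MDU.extZ_of_not_mem {z : Z} (hz : z ∉ A) (g : A → ℝ≥0∞) :
    MDU.extZ A g z = 0 := dif_neg hz

lemma MDU.extZ_comp (g : A → ℝ≥0∞) : (fun x : A => MDU.extZ A g ↑x) = g := by
  funext x; exact MDU.extZ_of_mem x.2 g

lemma MDU.extZ_measurable (hA : MeasurableSet A) {g : A → ℝ≥0∞} (hg : Measurable g) :
    Measurable (MDU.extZ A g) := by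
  classical
  exact Measurable.dite hg measurable_const hA

lemma MDU.lpN_extZ_le (hA : MeasurableSet A) (hp1 : 1 ≤ p) (g : A → ℝ≥0∞) :
    lpN μ p (MDU.extZ A g) ≤ lpN (subMeasure μ A) p g := by
  by_cases hp : p = ∞
  · subst hp; rw [MDU.lpN_top, MDU.lpN_top]
    refine essSup_le_of_ae_le _ ?_
    set c := essSup g (subMeasure μ A) with hc
    have h0 : subMeasure μ A {x | c < g x} = 0 := by
      simpa [ae_iff, not_le] using ENNReal.ae_le_essSup (μ := subMeasure μ A) g
    rw [MDU.sub_apply hA] at h0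
    rw [EventuallyLE, ae_iff]
    refine measure_mono_null ?_ h0
    intro z hz
    simp only [Set.mem_setOf_eq, not_le, Pi.zero_apply] at hz ⊢
    by_cases hzA : z ∈ A
    · rw [MDU.extZ_of_mem hzA] at hz
      exact ⟨⟨z, hzA⟩, hz, rfl⟩
    · rw [MDU.extZ_of_not_mem hzA] at hz
      exact absurd hz (by simp)
  · have he : 0 < p.toReal := MDU.toReal_pos hp1 hp
    rw [MDU.lpN_ne_top hp, MDU.lpN_ne_top hp]
    refine ENNReal.rpow_le_rpow (le_of_eq ?_) (by positivity)
    rw [← lintegral_add_compl (fun z => MDU.extZ A g z ^ p.toReal) hA]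
    have h2 : ∫⁻ z in Aᶜ, MDU.extZ A g z ^ p.toReal ∂μ = 0 := by
      rw [setLIntegral_congr_fun hA.compl
        (fun z (hz : z ∈ Aᶜ) => by
          rw [MDU.extZ_of_not_mem hz, ENNReal.zero_rpow_of_pos he])]
      simp
    rw [h2, add_zero, ← MDU.sub_lintegral hA (fun z => MDU.extZ A g z ^ p.toReal)]
    congr 1
    funext x
    rw [MDU.extZ_of_mem x.2]

end Part2

lemma MDU.div_add_le {a b c d : ℝ≥0∞} : (a + b) / (c + d) ≤ a / c ⊔ b / d := by
  by_cases hcd : c + d = ∞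
  · rw [hcd, ENNReal.div_top]; exact zero_le
  by_cases ha : a / c = ∞
  · exact le_sup_of_le_left (ha ▸ le_top)
  by_cases hb : b / d = ∞
  · exact le_sup_of_le_right (hb ▸ le_top)
  have hc : c ≠ ∞ := fun h => hcd (by simp [h])
  have hd : d ≠ ∞ := fun h => hcd (by simp [h])
  have hac : a ≤ (a / c ⊔ b / d) * c := by
    by_cases hc0 : c = 0
    · subst hc0
      by_cases ha0 : a = 0
      · simp [ha0]
      · exact absurd (ENNReal.div_zero ha0) ha
    · calc a = a / c * c := (ENNReal.div_mul_cancel hc0 hc).symm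
        _ ≤ (a / c ⊔ b / d) * c := mul_le_mul_left le_sup_left c
  have hbd : b ≤ (a / c ⊔ b / d) * d := by
    by_cases hd0 : d = 0
    · subst hd0
      by_cases hb0 : b = 0
      · simp [hb0]
      · exact absurd (ENNReal.div_zero hb0) hb
    · calc b = b / d * d := (ENNReal.div_mul_cancel hd0 hd).symm
        _ ≤ (a / c ⊔ b / d) * d := mul_le_mul_left le_sup_right d
  by_cases hcd0 : c + d = 0
  · have hc0 : c = 0 := by simpa using (add_eq_zero.mp hcd0).1
    have hd0 : d = 0 := by simpa using (add_eq_zero.mp hcd0).2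
    have ha0 : a = 0 := by simpa [hc0] using hac
    have hb0 : b = 0 := by simpa [hd0] using hbd
    simp [ha0, hb0]
  · rw [ENNReal.div_le_iff hcd0 hcd, mul_add]
    exact add_le_add hac hbd

section Part3
variable {Z : Type*} [MetricSpace Z] [MeasurableSpace Z] {μ : Measure Z} {A B : Set Z}

lemma MDU.ball_sub (hcover : A ∪ B = Set.univ) (hcross : ∀ a ∈ A, ∀ b ∈ B, dist a b = 2)
    {z : Z} (hz : z ∈ A) {r : ℝ} (hr : r ≤ 2) : Metric.ball z r ⊆ A := by
  intro w hw
  rw [Metric.mem_ball] at hw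
  rcases (hcover ▸ Set.mem_univ w : w ∈ A ∪ B) with h | h
  · exact h
  · exfalso
    have h2 := hcross z hz w h
    rw [dist_comm] at hw
    linarith

lemma MDU.ball_univ (hcover : A ∪ B = Set.univ) (hcross : ∀ a ∈ A, ∀ b ∈ B, dist a b = 2)
    (hbA : ∀ x ∈ A, ∀ y ∈ A, dist x y ≤ 2) (hbB : ∀ x ∈ B, ∀ y ∈ B, dist x y ≤ 2)
    (z : Z) {r : ℝ} (hr : 2 < r) : Metric.ball z r = Set.univ := by
  refine Set.eq_univ_of_forall fun w => ?_
  rw [Metric.mem_ball]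
  have hd : dist w z ≤ 2 := by
    rcases (hcover ▸ Set.mem_univ w : w ∈ A ∪ B) with hw | hw <;>
      rcases (hcover ▸ Set.mem_univ z : z ∈ A ∪ B) with hz | hz
    · exact hbA w hw z hz
    · exact le_of_eq (hcross w hw z hz)
    · exact le_of_eq (dist_comm w z ▸ hcross z hz w hw)
    · exact hbB w hw z hz
  linarith

lemma MDU.subtype_ball (x : A) (r : ℝ) :
    Metric.ball x r = Subtype.val ⁻¹' Metric.ball (x : Z) r := by
  ext y
  simp [Metric.mem_ball, Subtype.dist_eq]

lemma MDU.subtype_ball_univ (hbA : ∀ x ∈ A, ∀ y ∈ A, dist x y ≤ 2)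
    {r : ℝ} (hr : 2 < r) (x : A) : Metric.ball x r = Set.univ := by
  refine Set.eq_univ_of_forall fun y => ?_
  rw [Metric.mem_ball, Subtype.dist_eq]
  have := hbA y y.2 x x.2
  linarith

lemma MDU.avg_univ_le_cenMax {W : Type*} [MetricSpace W] [MeasurableSpace W] (ν : Measure W)
    (hb : ∀ x y : W, dist x y ≤ 2) (g : W → ℝ≥0∞) (x : W) :
    ballAvg ν Set.univ g ≤ cenMax ν g x := by
  have hball : Metric.ball x 3 = Set.univ :=
    Set.eq_univ_of_forall fun y => by
      rw [Metric.mem_ball]; have := hb y x; linarith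
  exact le_iSup₂_of_le 3 (by norm_num) (le_of_eq (by rw [hball]))

lemma MDU.avg_univ_le_ncMax {W : Type*} [MetricSpace W] [MeasurableSpace W] (ν : Measure W)
    (hb : ∀ x y : W, dist x y ≤ 2) (g : W → ℝ≥0∞) (x : W) :
    ballAvg ν Set.univ g ≤ ncMax ν g x := by
  have hball : Metric.ball x 3 = Set.univ :=
    Set.eq_univ_of_forall fun y => by
      rw [Metric.mem_ball]; have := hb y x; linarith
  refine le_iSup_of_le x (le_iSup_of_le 3 (le_iSup_of_le (by norm_num) ?_))
  rw [hball]
  exact le_iSup_of_le (Set.mem_univ x) le_rfl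

end Part3

section Part4
variable {Z : Type*} [MetricSpace Z] [MeasurableSpace Z] {μ : Measure Z} {A B : Set Z}

lemma MDU.cenMax_le_sub (hA : MeasurableSet A) (hcover : A ∪ B = Set.univ)
    (hcross : ∀ a ∈ A, ∀ b ∈ B, dist a b = 2)
    (hbA : ∀ x ∈ A, ∀ y ∈ A, dist x y ≤ 2) (hbB : ∀ x ∈ B, ∀ y ∈ B, dist x y ≤ 2)
    (f : Z → ℝ≥0∞) {z : Z} (hz : z ∈ A) :
    cenMax μ f z ≤ cenMax (subMeasure μ A) (fun x => f ↑x) ⟨z, hz⟩ ⊔ ballAvg μ Set.univ f := by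
  refine iSup₂_le fun r hr => ?_
  by_cases h2 : r ≤ 2
  · have hsub := MDU.ball_sub hcover hcross hz h2
    have heq : ballAvg μ (Metric.ball z r) f
        = ballAvg (subMeasure μ A) (Metric.ball (⟨z, hz⟩ : A) r) (fun x => f ↑x) := by
      rw [MDU.subtype_ball, MDU.sub_ballAvg hA hsub]
    rw [heq]
    exact le_sup_of_le_left (le_iSup₂_of_le r hr le_rfl)
  · rw [MDU.ball_univ hcover hcross hbA hbB z (not_le.1 h2)]
    exact le_sup_right

lemma MDU.sub_le_cenMax (hA : MeasurableSet A) (hcover : A ∪ B = Set.univ)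
    (hcross : ∀ a ∈ A, ∀ b ∈ B, dist a b = 2)
    (hbA : ∀ x ∈ A, ∀ y ∈ A, dist x y ≤ 2)
    (f : Z → ℝ≥0∞) {z : Z} (hz : z ∈ A) :
    cenMax (subMeasure μ A) (fun x => f ↑x) ⟨z, hz⟩
      ≤ cenMax μ f z ⊔ ballAvg (subMeasure μ A) Set.univ (fun x => f ↑x) := by
  refine iSup₂_le fun r hr => ?_
  by_cases h2 : r ≤ 2
  · have hsub := MDU.ball_sub hcover hcross hz h2
    rw [MDU.subtype_ball, MDU.sub_ballAvg hA hsub]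
    exact le_sup_of_le_left (le_iSup₂_of_le r hr le_rfl)
  · rw [MDU.subtype_ball_univ hbA (not_le.1 h2)]
    exact le_sup_right

lemma MDU.ncMax_le_sub (hA : MeasurableSet A) (hcover : A ∪ B = Set.univ)
    (hcross : ∀ a ∈ A, ∀ b ∈ B, dist a b = 2)
    (hbA : ∀ x ∈ A, ∀ y ∈ A, dist x y ≤ 2) (hbB : ∀ x ∈ B, ∀ y ∈ B, dist x y ≤ 2)
    (f : Z → ℝ≥0∞) {z : Z} (hz : z ∈ A) :
    ncMax μ f z ≤ ncMax (subMeasure μ A) (fun x => f ↑x) ⟨z, hz⟩ ⊔ ballAvg μ Set.univ f := by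
  refine iSup_le fun c => iSup_le fun r => iSup_le fun hr => iSup_le fun hzb => ?_
  by_cases h2 : r ≤ 2
  · have hcA : c ∈ A := by
      rcases (hcover ▸ Set.mem_univ c : c ∈ A ∪ B) with h | h
      · exact h
      · exfalso
        have hd := hcross z hz c h
        rw [Metric.mem_ball] at hzb
        linarith
    have hsub := MDU.ball_sub hcover hcross hcA h2
    have heq : ballAvg μ (Metric.ball c r) f
        = ballAvg (subMeasure μ A) (Metric.ball (⟨c, hcA⟩ : A) r) (fun x => f ↑x) := by
      rw [MDU.subtype_ball, MDU.sub_ballAvg hA hsub]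
    have hmem : (⟨z, hz⟩ : A) ∈ Metric.ball (⟨c, hcA⟩ : A) r := by
      rw [MDU.subtype_ball]; exact hzb
    rw [heq]
    exact le_sup_of_le_left
      (le_iSup_of_le ⟨c, hcA⟩ (le_iSup_of_le r (le_iSup_of_le hr (le_iSup_of_le hmem le_rfl))))
  · rw [MDU.ball_univ hcover hcross hbA hbB c (not_le.1 h2)]
    exact le_sup_right

lemma MDU.sub_le_ncMax (hA : MeasurableSet A) (hcover : A ∪ B = Set.univ)
    (hcross : ∀ a ∈ A, ∀ b ∈ B, dist a b = 2)
    (hbA : ∀ x ∈ A, ∀ y ∈ A, dist x y ≤ 2)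
    (f : Z → ℝ≥0∞) {z : Z} (hz : z ∈ A) :
    ncMax (subMeasure μ A) (fun x => f ↑x) ⟨z, hz⟩
      ≤ ncMax μ f z ⊔ ballAvg (subMeasure μ A) Set.univ (fun x => f ↑x) := by
  refine iSup_le fun c => iSup_le fun r => iSup_le fun hr => iSup_le fun hzb => ?_
  by_cases h2 : r ≤ 2
  · have hsub := MDU.ball_sub hcover hcross c.2 h2
    rw [MDU.subtype_ball, MDU.sub_ballAvg hA hsub]
    rw [MDU.subtype_ball] at hzb
    exact le_sup_of_le_left
      (le_iSup_of_le ↑c (le_iSup_of_le r (le_iSup_of_le hr (le_iSup_of_le hzb le_rfl))))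
  · rw [MDU.subtype_ball_univ hbA (not_le.1 h2)]
    exact le_sup_right

lemma MDU.avg_split (hA : MeasurableSet A) (hB : MeasurableSet B)
    (hdisj : Disjoint A B) (hcover : A ∪ B = Set.univ) (f : Z → ℝ≥0∞) :
    ballAvg μ Set.univ f ≤ ballAvg (subMeasure μ A) Set.univ (fun x => f ↑x)
      ⊔ ballAvg (subMeasure μ B) Set.univ (fun x => f ↑x) := by
  rw [MDU.ballAvg_univ_sub hA, MDU.ballAvg_univ_sub hB, ballAvg, Measure.restrict_univ]
  have hi : ∫⁻ z, f z ∂μ = (∫⁻ z in A, f z ∂μ) + ∫⁻ z in B, f z ∂μ := by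
    rw [← setLIntegral_univ, ← hcover, lintegral_union hB hdisj]
  have hm : μ Set.univ = μ A + μ B := by
    rw [← hcover, measure_union hdisj hB]
  rw [hi, hm]
  exact MDU.div_add_le

end Part4

section Part5
variable {Z : Type*} [MetricSpace Z] [MeasurableSpace Z] {μ : Measure Z} {A B : Set Z}
  {p : ℝ≥0∞}
  {TZ : (Z → ℝ≥0∞) → Z → ℝ≥0∞} {TA : (↥A → ℝ≥0∞) → ↥A → ℝ≥0∞}

def WeakIneq {α : Type*} [MeasurableSpace α] (μ : Measure α)
    (T : (α → ℝ≥0∞) → α → ℝ≥0∞) (p : ℝ≥0∞) : Prop :=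
  ∃ C : ℝ≥0∞, C ≠ ∞ ∧ ∀ f : α → ℝ≥0∞, Measurable f →
    ∀ l : ℝ≥0∞, l * (μ {x | l < T f x}) ^ (1 / p.toReal) ≤ C * lpN μ p f

lemma MDU.fwd_key [IsFiniteMeasure μ] (hA : MeasurableSet A) (hμA : μ A ≠ 0)
    (h1 : ∀ (f : Z → ℝ≥0∞) (z : Z), ballAvg μ Set.univ f ≤ TZ f z)
    (h4 : ∀ (f : Z → ℝ≥0∞) (z : Z) (hz : z ∈ A),
      TA (fun x => f ↑x) ⟨z, hz⟩ ≤ TZ f z ⊔ ballAvg (subMeasure μ A) Set.univ (fun x => f ↑x))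
    (g : A → ℝ≥0∞) (x : A) :
    TA g x ≤ (1 ⊔ μ Set.univ / μ A) * TZ (MDU.extZ A g) ↑x := by
  set f := MDU.extZ A g with hf
  set K := 1 ⊔ μ Set.univ / μ A with hKdef
  have h4' := h4 f ↑x x.2
  rw [MDU.extZ_comp, Subtype.coe_eta] at h4'
  -- integral of f is concentrated on A
  have hint : ∫⁻ z, f z ∂μ = ∫⁻ z in A, f z ∂μ := by
    rw [← lintegral_add_compl f hA]
    have h0 : ∫⁻ z in Aᶜ, f z ∂μ = 0 := by
      rw [setLIntegral_congr_fun hA.compl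
        (fun z (hz : z ∈ Aᶜ) => MDU.extZ_of_not_mem hz g)]
      simp
    rw [h0, add_zero]
  have hμuniv0 : μ Set.univ ≠ 0 := fun h =>
    hμA (le_antisymm (h ▸ measure_mono (Set.subset_univ A)) (zero_le))
  have havg : ballAvg (subMeasure μ A) Set.univ g
      = (μ Set.univ / μ A) * ballAvg μ Set.univ f := by
    conv_lhs => rw [← MDU.extZ_comp g, ← hf]
    rw [MDU.ballAvg_univ_sub hA, ballAvg, Measure.restrict_univ, hint]
    rw [div_eq_mul_inv, div_eq_mul_inv, div_eq_mul_inv]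
    calc (∫⁻ z in A, f z ∂μ) * (μ A)⁻¹
        = (∫⁻ z in A, f z ∂μ) * (μ A)⁻¹ * (μ Set.univ * (μ Set.univ)⁻¹) := by
          rw [ENNReal.mul_inv_cancel hμuniv0 (measure_ne_top μ _), mul_one]
      _ = μ Set.univ * (μ A)⁻¹ * ((∫⁻ z in A, f z ∂μ) * (μ Set.univ)⁻¹) := by ring
  calc TA g x ≤ TZ f ↑x ⊔ ballAvg (subMeasure μ A) Set.univ g := h4'
    _ = TZ f ↑x ⊔ ((μ Set.univ / μ A) * ballAvg μ Set.univ f) := by rw [havg]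
    _ ≤ TZ f ↑x ⊔ ((μ Set.univ / μ A) * TZ f ↑x) :=
        sup_le_sup_left (mul_le_mul_right (h1 f ↑x) _) _
    _ ≤ K * TZ f ↑x := by
        refine sup_le ?_ (mul_le_mul_left le_sup_right _)
        exact le_mul_of_one_le_left (zero_le) le_sup_left

lemma MDU.K_ne_top [IsFiniteMeasure μ] (hμA : μ A ≠ 0) :
    (1 ⊔ μ Set.univ / μ A) ≠ ∞ := by
  have h : μ Set.univ / μ A ≠ ∞ := (ENNReal.div_lt_top (measure_ne_top μ _) hμA).ne
  simp [h]

lemma MDU.fwd_strong [IsFiniteMeasure μ] (hA : MeasurableSet A)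
    (h1 : ∀ (f : Z → ℝ≥0∞) (z : Z), ballAvg μ Set.univ f ≤ TZ f z)
    (h4 : ∀ (f : Z → ℝ≥0∞) (z : Z) (hz : z ∈ A),
      TA (fun x => f ↑x) ⟨z, hz⟩ ≤ TZ f z ⊔ ballAvg (subMeasure μ A) Set.univ (fun x => f ↑x))
    (hp1 : 1 ≤ p) :
    IsStrongType μ TZ p → IsStrongType (subMeasure μ A) TA p := by
  rintro ⟨C, hC, hbound⟩
  by_cases hμA : μ A = 0
  · exact ⟨1, one_ne_top, fun g hg => by
      rw [MDU.sub_zero hA hμA, MDU.lpN_zero_measure hp1]; exact zero_le⟩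
  set K := 1 ⊔ μ Set.univ / μ A with hKdef
  have hK : K ≠ ∞ := MDU.K_ne_top hμA
  refine ⟨K * C, ENNReal.mul_ne_top hK hC, fun g hg => ?_⟩
  calc lpN (subMeasure μ A) p (TA g)
      ≤ lpN (subMeasure μ A) p (fun x => K * TZ (MDU.extZ A g) ↑x) :=
        MDU.lpN_mono hp1 (MDU.fwd_key hA hμA h1 h4 g)
    _ ≤ K * lpN (subMeasure μ A) p (fun x => TZ (MDU.extZ A g) ↑x) :=
        MDU.lpN_const_mul hp1 hK _
    _ ≤ K * lpN μ p (TZ (MDU.extZ A g)) :=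
        mul_le_mul_right (MDU.lpN_sub_le hA hp1 _) K
    _ ≤ K * (C * lpN μ p (MDU.extZ A g)) :=
        mul_le_mul_right (hbound _ (MDU.extZ_measurable hA hg)) K
    _ ≤ K * (C * lpN (subMeasure μ A) p g) :=
        mul_le_mul_right (mul_le_mul_right (MDU.lpN_extZ_le hA hp1 g) C) K
    _ = K * C * lpN (subMeasure μ A) p g := (mul_assoc _ _ _).symm

lemma MDU.fwd_weak [IsFiniteMeasure μ] (hA : MeasurableSet A)
    (h1 : ∀ (f : Z → ℝ≥0∞) (z : Z), ballAvg μ Set.univ f ≤ TZ f z)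
    (h4 : ∀ (f : Z → ℝ≥0∞) (z : Z) (hz : z ∈ A),
      TA (fun x => f ↑x) ⟨z, hz⟩ ≤ TZ f z ⊔ ballAvg (subMeasure μ A) Set.univ (fun x => f ↑x))
    (hp1 : 1 ≤ p) (hp : p ≠ ∞) :
    WeakIneq μ TZ p → WeakIneq (subMeasure μ A) TA p := by
  rintro ⟨C, hC, hbound⟩
  have he : 0 < p.toReal := MDU.toReal_pos hp1 hp
  by_cases hμA : μ A = 0
  · refine ⟨1, one_ne_top, fun g hg l => ?_⟩
    rw [MDU.sub_zero hA hμA]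
    simp only [Measure.coe_zero, Pi.zero_apply]
    rw [ENNReal.zero_rpow_of_pos (by positivity), mul_zero]
    exact zero_le
  set K := 1 ⊔ μ Set.univ / μ A with hKdef
  have hK : K ≠ ∞ := MDU.K_ne_top hμA
  have hK0 : K ≠ 0 := fun h => by simp [hKdef] at h
  refine ⟨K * C, ENNReal.mul_ne_top hK hC, fun g hg l => ?_⟩
  set f := MDU.extZ A g with hf
  have key := MDU.fwd_key hA hμA h1 h4 g
  have hsubset : {x : A | l < TA g x} ⊆ Subtype.val ⁻¹' {z | l < K * TZ f z} :=
    fun x hx => lt_of_lt_of_le hx (key x)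
  have hmeas : subMeasure μ A {x | l < TA g x} ≤ μ {z | l < K * TZ f z} := by
    refine le_trans (measure_mono hsubset) ?_
    rw [MDU.sub_preimage hA]
    exact measure_mono Set.inter_subset_left
  have step1 : l * (subMeasure μ A {x | l < TA g x}) ^ (1 / p.toReal)
      ≤ l * (μ {z | l < K * TZ f z}) ^ (1 / p.toReal) :=
    mul_le_mul_right (ENNReal.rpow_le_rpow hmeas (by positivity)) l
  refine le_trans step1 ?_
  by_cases hl : l = ∞
  · subst hl
    have hempty : {z | (∞ : ℝ≥0∞) < K * TZ f z} = ∅ :=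
      Set.eq_empty_of_forall_notMem fun z hz => not_top_lt (show (⊤:ℝ≥0∞) < K * TZ f z from hz)
    rw [hempty, measure_empty, ENNReal.zero_rpow_of_pos (by positivity), mul_zero]
    exact zero_le
  · have hsub2 : {z | l < K * TZ f z} ⊆ {z | l / K < TZ f z} := by
      intro z hz
      rw [Set.mem_setOf_eq, ENNReal.div_lt_iff (Or.inl hK0) (Or.inl hK)]
      rw [Set.mem_setOf_eq, mul_comm] at hz
      exact hz
    calc l * (μ {z | l < K * TZ f z}) ^ (1 / p.toReal)
        ≤ l * (μ {z | l / K < TZ f z}) ^ (1 / p.toReal) :=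
          mul_le_mul_right (ENNReal.rpow_le_rpow (measure_mono hsub2) (by positivity)) l
      _ = K * (l / K * (μ {z | l / K < TZ f z}) ^ (1 / p.toReal)) := by
          rw [← mul_assoc, ENNReal.mul_div_cancel' (fun h => absurd h hK0) (fun h => absurd h hK)]
      _ ≤ K * (C * lpN μ p f) := mul_le_mul_right (hbound f (MDU.extZ_measurable hA hg) _) K
      _ ≤ K * (C * lpN (subMeasure μ A) p g) :=
          mul_le_mul_right (mul_le_mul_right (MDU.lpN_extZ_le hA hp1 g) C) K
      _ = K * C * lpN (subMeasure μ A) p g := (mul_assoc _ _ _).symm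

end Part5

section Part6
variable {Z : Type*} [MetricSpace Z] [MeasurableSpace Z] {μ : Measure Z} {A B : Set Z}
  {p : ℝ≥0∞}
  {TZ : (Z → ℝ≥0∞) → Z → ℝ≥0∞} {TA : (↥A → ℝ≥0∞) → ↥A → ℝ≥0∞}
  {TB : (↥B → ℝ≥0∞) → ↥B → ℝ≥0∞}

lemma MDU.ballAvg_zero {W : Type*} [MeasurableSpace W] (s : Set W) (f : W → ℝ≥0∞) :
    ballAvg (0 : Measure W) s f = 0 := by
  simp [ballAvg]

lemma MDU.avg_le_essSup {W : Type*} [MeasurableSpace W] {ν : Measure W} {a : ℝ≥0∞}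
    {h : W → ℝ≥0∞} (hle : ∀ x, a ≤ h x) (hν : ν = 0 → a = 0) : a ≤ essSup h ν := by
  by_cases h0 : ν = 0
  · rw [hν h0]; exact zero_le
  · haveI : (ae ν).NeBot := MeasureTheory.ae_neBot.mpr h0
    obtain ⟨x, hx⟩ := (ENNReal.ae_le_essSup (μ := ν) h).exists
    exact le_trans (hle x) hx

lemma MDU.bwd_key (hA : MeasurableSet A) (hB : MeasurableSet B)
    (hdisj : Disjoint A B) (hcover : A ∪ B = Set.univ)
    (h2A : ∀ (g : ↥A → ℝ≥0∞) (x : ↥A), ballAvg (subMeasure μ A) Set.univ g ≤ TA g x)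
    (h3A : ∀ (f : Z → ℝ≥0∞) (z : Z) (hz : z ∈ A),
      TZ f z ≤ TA (fun x => f ↑x) ⟨z, hz⟩ ⊔ ballAvg μ Set.univ f)
    (f : Z → ℝ≥0∞) (z : Z) (hz : z ∈ A) :
    TZ f z ≤ TA (fun x => f ↑x) ⟨z, hz⟩
      ⊔ ballAvg (subMeasure μ B) Set.univ (fun x => f ↑x) := by
  refine le_trans (h3A f z hz) (sup_le le_sup_left ?_)
  refine le_trans (MDU.avg_split hA hB hdisj hcover f) (sup_le ?_ le_sup_right)
  exact le_sup_of_le_left (h2A _ _)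

lemma MDU.sup_rpow_le {x y : ℝ≥0∞} {e : ℝ} (he : 0 ≤ e) : (x ⊔ y) ^ e ≤ x ^ e + y ^ e := by
  rcases le_total x y with h | h
  · rw [sup_eq_right.2 h]; exact le_add_self
  · rw [sup_eq_left.2 h]; exact le_self_add

lemma MDU.bwd_piece [IsFiniteMeasure μ] (hA : MeasurableSet A) (hB : MeasurableSet B)
    {f : Z → ℝ≥0∞} {e : ℝ} (he : 0 < e)
    (hkey : ∀ (z : Z) (hz : z ∈ A), TZ f z ≤ TA (fun x => f ↑x) ⟨z, hz⟩
      ⊔ ballAvg (subMeasure μ B) Set.univ (fun x => f ↑x))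
    (h2B : ∀ (g : ↥B → ℝ≥0∞) (x : ↥B), ballAvg (subMeasure μ B) Set.univ g ≤ TB g x) :
    ∫⁻ z in A, TZ f z ^ e ∂μ
      ≤ (∫⁻ x, TA (fun x => f ↑x) x ^ e ∂subMeasure μ A)
        + (if μ B = 0 then 0 else μ A / μ B)
          * ∫⁻ x, TB (fun x => f ↑x) x ^ e ∂subMeasure μ B := by
  set aB := ballAvg (subMeasure μ B) Set.univ (fun x : B => f ↑x) with haB
  set HA := MDU.extZ A (fun x : A => TA (fun x : A => f ↑x) x) with hHA
  have step1 : ∫⁻ z in A, TZ f z ^ e ∂μ ≤ ∫⁻ z in A, (HA z ^ e + aB ^ e) ∂μ := by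
    refine setLIntegral_mono' hA fun z hz => ?_
    refine le_trans (ENNReal.rpow_le_rpow ?_ he.le) (MDU.sup_rpow_le he.le)
    rw [hHA, MDU.extZ_of_mem hz]
    exact hkey z hz
  have step2 : ∫⁻ z in A, (HA z ^ e + aB ^ e) ∂μ
      = (∫⁻ z in A, HA z ^ e ∂μ) + aB ^ e * μ A := by
    rw [lintegral_add_right _ measurable_const, setLIntegral_const]
  have step3 : ∫⁻ z in A, HA z ^ e ∂μ
      = ∫⁻ x, TA (fun x : A => f ↑x) x ^ e ∂subMeasure μ A := by
    rw [← MDU.sub_lintegral hA (fun z => HA z ^ e)]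
    congr 1
    funext x
    rw [hHA, MDU.extZ_of_mem x.2, Subtype.coe_eta]
  have step4 : aB ^ e * μ A
      ≤ (if μ B = 0 then 0 else μ A / μ B)
        * ∫⁻ x, TB (fun x : B => f ↑x) x ^ e ∂subMeasure μ B := by
    by_cases hμB : μ B = 0
    · have h0 : aB = 0 := by rw [haB, MDU.sub_zero hB hμB, MDU.ballAvg_zero]
      rw [h0, ENNReal.zero_rpow_of_pos he, zero_mul]
      exact zero_le
    · rw [if_neg hμB]
      have hab : aB ^ e * μ B ≤ ∫⁻ x, TB (fun x : B => f ↑x) x ^ e ∂subMeasure μ B := by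
        have h1 : aB ^ e * μ B = ∫⁻ _, aB ^ e ∂subMeasure μ B := by
          rw [lintegral_const, MDU.sub_univ hB]
        rw [h1]
        exact lintegral_mono fun x => ENNReal.rpow_le_rpow (h2B _ x) he.le
      calc aB ^ e * μ A = μ A / μ B * (aB ^ e * μ B) := by
            conv_lhs => rw [← ENNReal.div_mul_cancel hμB (measure_ne_top μ B) (b := μ A)]
            ring
        _ ≤ _ := mul_le_mul_right hab _
  refine le_trans step1 (le_trans (le_of_eq step2) ?_)
  exact add_le_add (le_of_eq step3) step4

end Part6

section Part7
variable {Z : Type*} [MetricSpace Z] [MeasurableSpace Z] {μ : Measure Z} {A B : Set Z}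
  {p : ℝ≥0∞}
  {TZ : (Z → ℝ≥0∞) → Z → ℝ≥0∞} {TA : (↥A → ℝ≥0∞) → ↥A → ℝ≥0∞}
  {TB : (↥B → ℝ≥0∞) → ↥B → ℝ≥0∞}

lemma MDU.bwd_strong [IsFiniteMeasure μ] (hA : MeasurableSet A) (hB : MeasurableSet B)
    (hdisj : Disjoint A B) (hcover : A ∪ B = Set.univ)
    (h2A : ∀ (g : ↥A → ℝ≥0∞) (x : ↥A), ballAvg (subMeasure μ A) Set.univ g ≤ TA g x)
    (h2B : ∀ (g : ↥B → ℝ≥0∞) (x : ↥B), ballAvg (subMeasure μ B) Set.univ g ≤ TB g x)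
    (h3A : ∀ (f : Z → ℝ≥0∞) (z : Z) (hz : z ∈ A),
      TZ f z ≤ TA (fun x => f ↑x) ⟨z, hz⟩ ⊔ ballAvg μ Set.univ f)
    (h3B : ∀ (f : Z → ℝ≥0∞) (z : Z) (hz : z ∈ B),
      TZ f z ≤ TB (fun x => f ↑x) ⟨z, hz⟩ ⊔ ballAvg μ Set.univ f)
    (hp1 : 1 ≤ p) :
    IsStrongType (subMeasure μ A) TA p → IsStrongType (subMeasure μ B) TB p →
      IsStrongType μ TZ p := by
  rintro ⟨CA, hCA, hbA⟩ ⟨CB, hCB, hbB⟩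
  have keyA := MDU.bwd_key hA hB hdisj hcover h2A h3A
  have keyB := MDU.bwd_key hB hA hdisj.symm (by rw [Set.union_comm]; exact hcover) h2B h3B
  by_cases hp : p = ∞
  · subst hp
    refine ⟨CA + CB, ENNReal.add_ne_top.2 ⟨hCA, hCB⟩, fun f hf => ?_⟩
    set fA := fun x : ↥A => f ↑x with hfA
    set fB := fun x : ↥B => f ↑x with hfB
    set EA := essSup (TA fA) (subMeasure μ A) with hEA
    set EB := essSup (TB fB) (subMeasure μ B) with hEB
    have haB : ballAvg (subMeasure μ B) Set.univ fB ≤ EB :=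
      MDU.avg_le_essSup (fun x => h2B fB x) (fun h0 => by rw [h0, MDU.ballAvg_zero])
    have haA : ballAvg (subMeasure μ A) Set.univ fA ≤ EA :=
      MDU.avg_le_essSup (fun x => h2A fA x) (fun h0 => by rw [h0, MDU.ballAvg_zero])
    have hbadA : μ (Subtype.val '' {x : ↥A | EA < TA fA x}) = 0 := by
      rw [← MDU.sub_apply hA]
      simpa [ae_iff, not_le] using ENNReal.ae_le_essSup (μ := subMeasure μ A) (TA fA)
    have hbadB : μ (Subtype.val '' {x : ↥B | EB < TB fB x}) = 0 := by
      rw [← MDU.sub_apply hB]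
      simpa [ae_iff, not_le] using ENNReal.ae_le_essSup (μ := subMeasure μ B) (TB fB)
    have hae : ∀ᵐ z ∂μ, TZ f z ≤ EA ⊔ EB := by
      rw [ae_iff]
      refine measure_mono_null ?_ (measure_union_null hbadA hbadB)
      intro z hz
      simp only [Set.mem_setOf_eq, not_le] at hz
      rcases (hcover ▸ Set.mem_univ z : z ∈ A ∪ B) with hzA | hzB
      · refine Or.inl ⟨⟨z, hzA⟩, ?_, rfl⟩
        rw [Set.mem_setOf_eq]
        by_contra hcon
        push_neg at hcon
        exact absurd (le_trans (keyA f z hzA)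
          (sup_le (le_sup_of_le_left hcon) (le_sup_of_le_right haB))) (not_le.2 hz)
      · refine Or.inr ⟨⟨z, hzB⟩, ?_, rfl⟩
        rw [Set.mem_setOf_eq]
        by_contra hcon
        push_neg at hcon
        exact absurd (le_trans (keyB f z hzB)
          (sup_le (le_sup_of_le_right hcon) (le_sup_of_le_left haA))) (not_le.2 hz)
    rw [MDU.lpN_top]
    calc essSup (TZ f) μ ≤ EA ⊔ EB := essSup_le_of_ae_le _ hae
      _ ≤ CA * lpN (subMeasure μ A) ⊤ fA ⊔ CB * lpN (subMeasure μ B) ⊤ fB := by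
          refine sup_le_sup ?_ ?_
          · rw [hEA, ← MDU.lpN_top]; exact hbA fA (hf.comp measurable_subtype_coe)
          · rw [hEB, ← MDU.lpN_top]; exact hbB fB (hf.comp measurable_subtype_coe)
      _ ≤ (CA + CB) * lpN μ ⊤ f := by
          refine sup_le ?_ ?_
          · exact mul_le_mul le_self_add (MDU.lpN_sub_le hA hp1 f) (zero_le) (zero_le)
          · exact mul_le_mul le_add_self (MDU.lpN_sub_le hB hp1 f) (zero_le) (zero_le)
  · have he : 0 < p.toReal := MDU.toReal_pos hp1 hp
    have he1 : 1 ≤ p.toReal := by simpa using ENNReal.toReal_mono hp hp1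
    set kA := if μ A = 0 then 0 else μ B / μ A with hkA
    set kB := if μ B = 0 then 0 else μ A / μ B with hkB
    have hkAne : (1 + kA) ≠ ∞ := by
      rw [hkA]; split_ifs with h
      · simp
      · exact ENNReal.add_ne_top.2 ⟨one_ne_top, (ENNReal.div_lt_top (measure_ne_top μ _) h).ne⟩
    have hkBne : (1 + kB) ≠ ∞ := by
      rw [hkB]; split_ifs with h
      · simp
      · exact ENNReal.add_ne_top.2 ⟨one_ne_top, (ENNReal.div_lt_top (measure_ne_top μ _) h).ne⟩
    set c1 := (1 + kA) ^ (1 / p.toReal) * CA with hc1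
    set c2 := (1 + kB) ^ (1 / p.toReal) * CB with hc2
    refine ⟨c1 + c2, ENNReal.add_ne_top.2
      ⟨ENNReal.mul_ne_top (ENNReal.rpow_ne_top_of_nonneg (by positivity) hkAne) hCA,
       ENNReal.mul_ne_top (ENNReal.rpow_ne_top_of_nonneg (by positivity) hkBne) hCB⟩,
      fun f hf => ?_⟩
    set fA := fun x : ↥A => f ↑x with hfA
    set fB := fun x : ↥B => f ↑x with hfB
    have pieceA : ∫⁻ z in A, TZ f z ^ p.toReal ∂μ
        ≤ (∫⁻ x, TA fA x ^ p.toReal ∂subMeasure μ A)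
          + kB * ∫⁻ x, TB fB x ^ p.toReal ∂subMeasure μ B :=
      MDU.bwd_piece hA hB he (keyA f) h2B
    have pieceB : ∫⁻ z in B, TZ f z ^ p.toReal ∂μ
        ≤ (∫⁻ x, TB fB x ^ p.toReal ∂subMeasure μ B)
          + kA * ∫⁻ x, TA fA x ^ p.toReal ∂subMeasure μ A :=
      MDU.bwd_piece hB hA he (keyB f) h2A
    set JA := ∫⁻ x, TA fA x ^ p.toReal ∂subMeasure μ A with hJA
    set JB := ∫⁻ x, TB fB x ^ p.toReal ∂subMeasure μ B with hJB
    have hsplit : ∫⁻ z, TZ f z ^ p.toReal ∂μ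
        = (∫⁻ z in A, TZ f z ^ p.toReal ∂μ) + ∫⁻ z in B, TZ f z ^ p.toReal ∂μ := by
      rw [← setLIntegral_univ, ← hcover, lintegral_union hB hdisj]
    have htot : ∫⁻ z, TZ f z ^ p.toReal ∂μ ≤ (1 + kA) * JA + (1 + kB) * JB := by
      rw [hsplit]
      calc (∫⁻ z in A, TZ f z ^ p.toReal ∂μ) + ∫⁻ z in B, TZ f z ^ p.toReal ∂μ
          ≤ (JA + kB * JB) + (JB + kA * JA) := add_le_add pieceA pieceB
        _ = (1 + kA) * JA + (1 + kB) * JB := by ring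
    rw [MDU.lpN_ne_top hp]
    calc (∫⁻ z, TZ f z ^ p.toReal ∂μ) ^ (1 / p.toReal)
        ≤ ((1 + kA) * JA + (1 + kB) * JB) ^ (1 / p.toReal) :=
          ENNReal.rpow_le_rpow htot (by positivity)
      _ ≤ ((1 + kA) * JA) ^ (1 / p.toReal) + ((1 + kB) * JB) ^ (1 / p.toReal) :=
          ENNReal.rpow_add_le_add_rpow _ _ (by positivity) (by rw [div_le_one he]; exact he1)
      _ = (1 + kA) ^ (1 / p.toReal) * JA ^ (1 / p.toReal)
          + (1 + kB) ^ (1 / p.toReal) * JB ^ (1 / p.toReal) := by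
          rw [ENNReal.mul_rpow_of_nonneg _ _ (by positivity : (0:ℝ) ≤ 1 / p.toReal),
            ENNReal.mul_rpow_of_nonneg _ _ (by positivity : (0:ℝ) ≤ 1 / p.toReal)]
      _ ≤ (1 + kA) ^ (1 / p.toReal) * (CA * lpN μ p f)
          + (1 + kB) ^ (1 / p.toReal) * (CB * lpN μ p f) := by
          refine add_le_add (mul_le_mul_right ?_ _) (mul_le_mul_right ?_ _)
          · calc JA ^ (1 / p.toReal) = lpN (subMeasure μ A) p (TA fA) :=
                (MDU.lpN_ne_top hp _).symm
              _ ≤ CA * lpN (subMeasure μ A) p fA := hbA fA (hf.comp measurable_subtype_coe)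
              _ ≤ CA * lpN μ p f := mul_le_mul_right (MDU.lpN_sub_le hA hp1 f) CA
          · calc JB ^ (1 / p.toReal) = lpN (subMeasure μ B) p (TB fB) :=
                (MDU.lpN_ne_top hp _).symm
              _ ≤ CB * lpN (subMeasure μ B) p fB := hbB fB (hf.comp measurable_subtype_coe)
              _ ≤ CB * lpN μ p f := mul_le_mul_right (MDU.lpN_sub_le hB hp1 f) CB
      _ = (c1 + c2) * lpN μ p f := by rw [hc1, hc2]; ring

end Part7

section Part8
variable {Z : Type*} [MetricSpace Z] [MeasurableSpace Z] {μ : Measure Z} {A B : Set Z}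
  {p : ℝ≥0∞}
  {TZ : (Z → ℝ≥0∞) → Z → ℝ≥0∞} {TA : (↥A → ℝ≥0∞) → ↥A → ℝ≥0∞}
  {TB : (↥B → ℝ≥0∞) → ↥B → ℝ≥0∞}

lemma MDU.bwd_weak [IsFiniteMeasure μ] (hA : MeasurableSet A) (hB : MeasurableSet B)
    (hdisj : Disjoint A B) (hcover : A ∪ B = Set.univ)
    (h2A : ∀ (g : ↥A → ℝ≥0∞) (x : ↥A), ballAvg (subMeasure μ A) Set.univ g ≤ TA g x)
    (h2B : ∀ (g : ↥B → ℝ≥0∞) (x : ↥B), ballAvg (subMeasure μ B) Set.univ g ≤ TB g x)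
    (h3A : ∀ (f : Z → ℝ≥0∞) (z : Z) (hz : z ∈ A),
      TZ f z ≤ TA (fun x => f ↑x) ⟨z, hz⟩ ⊔ ballAvg μ Set.univ f)
    (h3B : ∀ (f : Z → ℝ≥0∞) (z : Z) (hz : z ∈ B),
      TZ f z ≤ TB (fun x => f ↑x) ⟨z, hz⟩ ⊔ ballAvg μ Set.univ f)
    (hp1 : 1 ≤ p) (hp : p ≠ ∞) :
    WeakIneq (subMeasure μ A) TA p → WeakIneq (subMeasure μ B) TB p → WeakIneq μ TZ p := by
  rintro ⟨CA, hCA, hbA⟩ ⟨CB, hCB, hbB⟩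
  have keyA := MDU.bwd_key hA hB hdisj hcover h2A h3A
  have keyB := MDU.bwd_key hB hA hdisj.symm (by rw [Set.union_comm]; exact hcover) h2B h3B
  have he : 0 < p.toReal := MDU.toReal_pos hp1 hp
  have hee : (0:ℝ) < 1 / p.toReal := by positivity
  have hee1 : 1 / p.toReal ≤ 1 := by
    rw [div_le_one he]; simpa using ENNReal.toReal_mono hp hp1
  set kA := if μ A = 0 then 0 else (μ B / μ A) ^ (1 / p.toReal) with hkA
  set kB := if μ B = 0 then 0 else (μ A / μ B) ^ (1 / p.toReal) with hkB
  have hkAne : kA ≠ ∞ := by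
    rw [hkA]; split_ifs with h
    · simp
    · exact ENNReal.rpow_ne_top_of_nonneg hee.le (ENNReal.div_lt_top (measure_ne_top μ _) h).ne
  have hkBne : kB ≠ ∞ := by
    rw [hkB]; split_ifs with h
    · simp
    · exact ENNReal.rpow_ne_top_of_nonneg hee.le (ENNReal.div_lt_top (measure_ne_top μ _) h).ne
  refine ⟨CA + kB * CB + (CB + kA * CA), by
      refine ENNReal.add_ne_top.2 ⟨ENNReal.add_ne_top.2 ⟨hCA, ENNReal.mul_ne_top hkBne hCB⟩, ?_⟩
      exact ENNReal.add_ne_top.2 ⟨hCB, ENNReal.mul_ne_top hkAne hCA⟩,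
    fun f hf l => ?_⟩
  set fA := fun x : ↥A => f ↑x with hfA
  set fB := fun x : ↥B => f ↑x with hfB
  set X := lpN μ p f with hX
  have hfAm : Measurable fA := hf.comp measurable_subtype_coe
  have hfBm : Measurable fB := hf.comp measurable_subtype_coe
  -- side estimates
  have sideA : μ ({z | l < TZ f z} ∩ A)
      ≤ subMeasure μ A {x | l < TA fA x}
        + (if l < ballAvg (subMeasure μ B) Set.univ fB then μ A else 0) := by
    have hsub : {z | l < TZ f z} ∩ A ⊆ (Subtype.val '' {x : ↥A | l < TA fA x})
        ∪ (if l < ballAvg (subMeasure μ B) Set.univ fB then A else ∅) := by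
      rintro z ⟨hzS, hzA⟩
      rcases lt_sup_iff.1 (lt_of_lt_of_le hzS (keyA f z hzA)) with h | h
      · exact Or.inl ⟨⟨z, hzA⟩, h, rfl⟩
      · refine Or.inr ?_; rw [if_pos h]; exact hzA
    refine le_trans (measure_mono hsub) (le_trans (measure_union_le _ _) ?_)
    refine add_le_add (le_of_eq (MDU.sub_apply hA _).symm) ?_
    split_ifs
    · exact le_rfl
    · simp
  have sideB : μ ({z | l < TZ f z} ∩ B)
      ≤ subMeasure μ B {x | l < TB fB x}
        + (if l < ballAvg (subMeasure μ A) Set.univ fA then μ B else 0) := by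
    have hsub : {z | l < TZ f z} ∩ B ⊆ (Subtype.val '' {x : ↥B | l < TB fB x})
        ∪ (if l < ballAvg (subMeasure μ A) Set.univ fA then B else ∅) := by
      rintro z ⟨hzS, hzB⟩
      rcases lt_sup_iff.1 (lt_of_lt_of_le hzS (keyB f z hzB)) with h | h
      · exact Or.inl ⟨⟨z, hzB⟩, h, rfl⟩
      · refine Or.inr ?_; rw [if_pos h]; exact hzB
    refine le_trans (measure_mono hsub) (le_trans (measure_union_le _ _) ?_)
    refine add_le_add (le_of_eq (MDU.sub_apply hB _).symm) ?_
    split_ifs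
    · exact le_rfl
    · simp
  -- term bounds
  have tA1 : l * (subMeasure μ A {x | l < TA fA x}) ^ (1 / p.toReal) ≤ CA * X :=
    le_trans (hbA fA hfAm l) (mul_le_mul_right (MDU.lpN_sub_le hA hp1 f) CA)
  have tB1 : l * (subMeasure μ B {x | l < TB fB x}) ^ (1 / p.toReal) ≤ CB * X :=
    le_trans (hbB fB hfBm l) (mul_le_mul_right (MDU.lpN_sub_le hB hp1 f) CB)
  have tA2 : l * (if l < ballAvg (subMeasure μ B) Set.univ fB then μ A else 0) ^ (1 / p.toReal)
      ≤ kB * (CB * X) := by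
    by_cases hl : l < ballAvg (subMeasure μ B) Set.univ fB
    · rw [if_pos hl]
      have hμB : μ B ≠ 0 := by
        intro h0
        rw [MDU.sub_zero hB h0, MDU.ballAvg_zero] at hl
        simp at hl
      have hfull : {x : ↥B | l < TB fB x} = Set.univ :=
        Set.eq_univ_of_forall fun x => lt_of_lt_of_le hl (h2B fB x)
      have hwB := hbB fB hfBm l
      rw [hfull, MDU.sub_univ hB] at hwB
      have hwB' : l * μ B ^ (1 / p.toReal) ≤ CB * X :=
        le_trans hwB (mul_le_mul_right (MDU.lpN_sub_le hB hp1 f) CB)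
      have hμAeq : (μ A) ^ (1 / p.toReal)
          = (μ A / μ B) ^ (1 / p.toReal) * (μ B) ^ (1 / p.toReal) := by
        rw [← ENNReal.mul_rpow_of_nonneg _ _ hee.le,
          ENNReal.div_mul_cancel hμB (measure_ne_top μ B)]
      rw [hμAeq, hkB, if_neg hμB]
      calc l * ((μ A / μ B) ^ (1 / p.toReal) * μ B ^ (1 / p.toReal))
          = (μ A / μ B) ^ (1 / p.toReal) * (l * μ B ^ (1 / p.toReal)) := by ring
        _ ≤ (μ A / μ B) ^ (1 / p.toReal) * (CB * X) := mul_le_mul_right hwB' _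
    · rw [if_neg hl, ENNReal.zero_rpow_of_pos hee, mul_zero]
      exact zero_le
  have tB2 : l * (if l < ballAvg (subMeasure μ A) Set.univ fA then μ B else 0) ^ (1 / p.toReal)
      ≤ kA * (CA * X) := by
    by_cases hl : l < ballAvg (subMeasure μ A) Set.univ fA
    · rw [if_pos hl]
      have hμA : μ A ≠ 0 := by
        intro h0
        rw [MDU.sub_zero hA h0, MDU.ballAvg_zero] at hl
        simp at hl
      have hfull : {x : ↥A | l < TA fA x} = Set.univ :=
        Set.eq_univ_of_forall fun x => lt_of_lt_of_le hl (h2A fA x)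
      have hwA := hbA fA hfAm l
      rw [hfull, MDU.sub_univ hA] at hwA
      have hwA' : l * μ A ^ (1 / p.toReal) ≤ CA * X :=
        le_trans hwA (mul_le_mul_right (MDU.lpN_sub_le hA hp1 f) CA)
      have hμBeq : (μ B) ^ (1 / p.toReal)
          = (μ B / μ A) ^ (1 / p.toReal) * (μ A) ^ (1 / p.toReal) := by
        rw [← ENNReal.mul_rpow_of_nonneg _ _ hee.le,
          ENNReal.div_mul_cancel hμA (measure_ne_top μ A)]
      rw [hμBeq, hkA, if_neg hμA]
      calc l * ((μ B / μ A) ^ (1 / p.toReal) * μ A ^ (1 / p.toReal))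
          = (μ B / μ A) ^ (1 / p.toReal) * (l * μ A ^ (1 / p.toReal)) := by ring
        _ ≤ (μ B / μ A) ^ (1 / p.toReal) * (CA * X) := mul_le_mul_right hwA' _
    · rw [if_neg hl, ENNReal.zero_rpow_of_pos hee, mul_zero]
      exact zero_le
  -- assembly
  have hcup : μ {z | l < TZ f z} ≤ μ ({z | l < TZ f z} ∩ A) + μ ({z | l < TZ f z} ∩ B) := by
    conv_lhs => rw [show {z | l < TZ f z} = ({z | l < TZ f z} ∩ A) ∪ ({z | l < TZ f z} ∩ B) by
      rw [← Set.inter_union_distrib_left, hcover, Set.inter_univ]]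
    exact measure_union_le _ _
  set m1 := subMeasure μ A {x | l < TA fA x} with hm1
  set m2 := (if l < ballAvg (subMeasure μ B) Set.univ fB then μ A else 0) with hm2
  set m3 := subMeasure μ B {x | l < TB fB x} with hm3
  set m4 := (if l < ballAvg (subMeasure μ A) Set.univ fA then μ B else 0) with hm4
  calc l * (μ {z | l < TZ f z}) ^ (1 / p.toReal)
      ≤ l * ((m1 + m2) + (m3 + m4)) ^ (1 / p.toReal) :=
        mul_le_mul_right (ENNReal.rpow_le_rpow
          (le_trans hcup (add_le_add sideA sideB)) hee.le) l
    _ ≤ l * ((m1 ^ (1 / p.toReal) + m2 ^ (1 / p.toReal))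
        + (m3 ^ (1 / p.toReal) + m4 ^ (1 / p.toReal))) := by
        refine mul_le_mul_right ?_ l
        refine le_trans (ENNReal.rpow_add_le_add_rpow _ _ hee.le hee1) ?_
        exact add_le_add (ENNReal.rpow_add_le_add_rpow _ _ hee.le hee1)
          (ENNReal.rpow_add_le_add_rpow _ _ hee.le hee1)
    _ = (l * m1 ^ (1 / p.toReal) + l * m2 ^ (1 / p.toReal))
        + (l * m3 ^ (1 / p.toReal) + l * m4 ^ (1 / p.toReal)) := by ring
    _ ≤ (CA * X + kB * (CB * X)) + (CB * X + kA * (CA * X)) :=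
        add_le_add (add_le_add tA1 tA2) (add_le_add tB1 tB2)
    _ = (CA + kB * CB + (CB + kA * CA)) * X := by ring

end Part8


lemma MDU.weakType_top {W : Type*} [MeasurableSpace W] {ν : Measure W}
    {T : (W → ℝ≥0∞) → W → ℝ≥0∞} : IsWeakType ν T ∞ ↔ IsStrongType ν T ∞ := by
  unfold IsWeakType
  rw [if_pos rfl]

lemma MDU.weakType_ne_top {W : Type*} [MeasurableSpace W] {ν : Measure W}
    {T : (W → ℝ≥0∞) → W → ℝ≥0∞} {p : ℝ≥0∞} (hp : p ≠ ∞) :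
    IsWeakType ν T p ↔ WeakIneq ν T p := by
  unfold IsWeakType WeakIneq
  rw [if_neg hp]

/-- if `Z` is the disjoint union of `A` and `B`, with all distances
inside `A` and inside `B` at most `2` and all distances between `A` and `B` equal
to `2`, and the (finite) measure is the sum of the pieces, then for each `p ∈ [1,∞]`
the maximal operator on `Z` (centered or non-centered) is of strong (resp. weak)
type `(p,p)` iff the maximal operators of both pieces are. -/
theorem maximal_disjoint_union {Z : Type*} [MetricSpace Z] [MeasurableSpace Z]
    (μ : Measure Z) [IsFiniteMeasure μ]
    (A B : Set Z) (hA : MeasurableSet A) (hB : MeasurableSet B)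
    (hdisj : Disjoint A B) (hcover : A ∪ B = Set.univ)
    (hcross : ∀ a ∈ A, ∀ b ∈ B, dist a b = 2)
    (hboundA : ∀ x ∈ A, ∀ y ∈ A, dist x y ≤ 2)
    (hboundB : ∀ x ∈ B, ∀ y ∈ B, dist x y ≤ 2) :
    ∀ p : ℝ≥0∞, 1 ≤ p →
      (IsStrongType μ (ncMax μ) p ↔
        IsStrongType (subMeasure μ A) (ncMax (subMeasure μ A)) p ∧
        IsStrongType (subMeasure μ B) (ncMax (subMeasure μ B)) p) ∧
      (IsWeakType μ (ncMax μ) p ↔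
        IsWeakType (subMeasure μ A) (ncMax (subMeasure μ A)) p ∧
        IsWeakType (subMeasure μ B) (ncMax (subMeasure μ B)) p) ∧
      (IsStrongType μ (cenMax μ) p ↔
        IsStrongType (subMeasure μ A) (cenMax (subMeasure μ A)) p ∧
        IsStrongType (subMeasure μ B) (cenMax (subMeasure μ B)) p) ∧
      (IsWeakType μ (cenMax μ) p ↔
        IsWeakType (subMeasure μ A) (cenMax (subMeasure μ A)) p ∧
        IsWeakType (subMeasure μ B) (cenMax (subMeasure μ B)) p) := by
  intro p hp1
  -- global distance bound on Z
  have hbZ : ∀ x y : Z, dist x y ≤ 2 := by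
    intro x y
    rcases (hcover ▸ Set.mem_univ x : x ∈ A ∪ B) with hx | hx <;>
      rcases (hcover ▸ Set.mem_univ y : y ∈ A ∪ B) with hy | hy
    · exact hboundA x hx y hy
    · exact le_of_eq (hcross x hx y hy)
    · exact le_of_eq (dist_comm x y ▸ hcross y hy x hx)
    · exact hboundB x hx y hy
  have hbA' : ∀ x y : ↥A, dist x y ≤ 2 := fun x y => by
    rw [Subtype.dist_eq]; exact hboundA ↑x x.2 ↑y y.2
  have hbB' : ∀ x y : ↥B, dist x y ≤ 2 := fun x y => by
    rw [Subtype.dist_eq]; exact hboundB ↑x x.2 ↑y y.2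
  have hcover' : B ∪ A = Set.univ := by rw [Set.union_comm]; exact hcover
  have hcross' : ∀ b ∈ B, ∀ a ∈ A, dist b a = 2 := fun b hb a ha =>
    dist_comm b a ▸ hcross a ha b hb
  -- hypothesis bundle for the centered operator
  have h1c : ∀ (f : Z → ℝ≥0∞) (z : Z), ballAvg μ Set.univ f ≤ cenMax μ f z :=
    fun f z => MDU.avg_univ_le_cenMax μ hbZ f z
  have h2Ac : ∀ (g : ↥A → ℝ≥0∞) (x : ↥A),
      ballAvg (subMeasure μ A) Set.univ g ≤ cenMax (subMeasure μ A) g x :=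
    fun g x => MDU.avg_univ_le_cenMax _ hbA' g x
  have h2Bc : ∀ (g : ↥B → ℝ≥0∞) (x : ↥B),
      ballAvg (subMeasure μ B) Set.univ g ≤ cenMax (subMeasure μ B) g x :=
    fun g x => MDU.avg_univ_le_cenMax _ hbB' g x
  have h3Ac : ∀ (f : Z → ℝ≥0∞) (z : Z) (hz : z ∈ A),
      cenMax μ f z ≤ cenMax (subMeasure μ A) (fun x => f ↑x) ⟨z, hz⟩ ⊔ ballAvg μ Set.univ f :=
    fun f z hz => MDU.cenMax_le_sub hA hcover hcross hboundA hboundB f hz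
  have h3Bc : ∀ (f : Z → ℝ≥0∞) (z : Z) (hz : z ∈ B),
      cenMax μ f z ≤ cenMax (subMeasure μ B) (fun x => f ↑x) ⟨z, hz⟩ ⊔ ballAvg μ Set.univ f :=
    fun f z hz => MDU.cenMax_le_sub hB hcover' hcross' hboundB hboundA f hz
  have h4Ac : ∀ (f : Z → ℝ≥0∞) (z : Z) (hz : z ∈ A),
      cenMax (subMeasure μ A) (fun x => f ↑x) ⟨z, hz⟩
        ≤ cenMax μ f z ⊔ ballAvg (subMeasure μ A) Set.univ (fun x => f ↑x) :=
    fun f z hz => MDU.sub_le_cenMax hA hcover hcross hboundA f hz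
  have h4Bc : ∀ (f : Z → ℝ≥0∞) (z : Z) (hz : z ∈ B),
      cenMax (subMeasure μ B) (fun x => f ↑x) ⟨z, hz⟩
        ≤ cenMax μ f z ⊔ ballAvg (subMeasure μ B) Set.univ (fun x => f ↑x) :=
    fun f z hz => MDU.sub_le_cenMax hB hcover' hcross' hboundB f hz
  -- hypothesis bundle for the non-centered operator
  have h1n : ∀ (f : Z → ℝ≥0∞) (z : Z), ballAvg μ Set.univ f ≤ ncMax μ f z :=
    fun f z => MDU.avg_univ_le_ncMax μ hbZ f z
  have h2An : ∀ (g : ↥A → ℝ≥0∞) (x : ↥A),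
      ballAvg (subMeasure μ A) Set.univ g ≤ ncMax (subMeasure μ A) g x :=
    fun g x => MDU.avg_univ_le_ncMax _ hbA' g x
  have h2Bn : ∀ (g : ↥B → ℝ≥0∞) (x : ↥B),
      ballAvg (subMeasure μ B) Set.univ g ≤ ncMax (subMeasure μ B) g x :=
    fun g x => MDU.avg_univ_le_ncMax _ hbB' g x
  have h3An : ∀ (f : Z → ℝ≥0∞) (z : Z) (hz : z ∈ A),
      ncMax μ f z ≤ ncMax (subMeasure μ A) (fun x => f ↑x) ⟨z, hz⟩ ⊔ ballAvg μ Set.univ f :=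
    fun f z hz => MDU.ncMax_le_sub hA hcover hcross hboundA hboundB f hz
  have h3Bn : ∀ (f : Z → ℝ≥0∞) (z : Z) (hz : z ∈ B),
      ncMax μ f z ≤ ncMax (subMeasure μ B) (fun x => f ↑x) ⟨z, hz⟩ ⊔ ballAvg μ Set.univ f :=
    fun f z hz => MDU.ncMax_le_sub hB hcover' hcross' hboundB hboundA f hz
  have h4An : ∀ (f : Z → ℝ≥0∞) (z : Z) (hz : z ∈ A),
      ncMax (subMeasure μ A) (fun x => f ↑x) ⟨z, hz⟩
        ≤ ncMax μ f z ⊔ ballAvg (subMeasure μ A) Set.univ (fun x => f ↑x) :=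
    fun f z hz => MDU.sub_le_ncMax hA hcover hcross hboundA f hz
  have h4Bn : ∀ (f : Z → ℝ≥0∞) (z : Z) (hz : z ∈ B),
      ncMax (subMeasure μ B) (fun x => f ↑x) ⟨z, hz⟩
        ≤ ncMax μ f z ⊔ ballAvg (subMeasure μ B) Set.univ (fun x => f ↑x) :=
    fun f z hz => MDU.sub_le_ncMax hB hcover' hcross' hboundB f hz
  -- the four statements
  have strong_nc : IsStrongType μ (ncMax μ) p ↔
      IsStrongType (subMeasure μ A) (ncMax (subMeasure μ A)) p ∧
      IsStrongType (subMeasure μ B) (ncMax (subMeasure μ B)) p := by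
    constructor
    · exact fun h => ⟨MDU.fwd_strong hA h1n h4An hp1 h, MDU.fwd_strong hB h1n h4Bn hp1 h⟩
    · exact fun h => MDU.bwd_strong hA hB hdisj hcover h2An h2Bn h3An h3Bn hp1 h.1 h.2
  have strong_cen : IsStrongType μ (cenMax μ) p ↔
      IsStrongType (subMeasure μ A) (cenMax (subMeasure μ A)) p ∧
      IsStrongType (subMeasure μ B) (cenMax (subMeasure μ B)) p := by
    constructor
    · exact fun h => ⟨MDU.fwd_strong hA h1c h4Ac hp1 h, MDU.fwd_strong hB h1c h4Bc hp1 h⟩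
    · exact fun h => MDU.bwd_strong hA hB hdisj hcover h2Ac h2Bc h3Ac h3Bc hp1 h.1 h.2
  have weak_nc : IsWeakType μ (ncMax μ) p ↔
      IsWeakType (subMeasure μ A) (ncMax (subMeasure μ A)) p ∧
      IsWeakType (subMeasure μ B) (ncMax (subMeasure μ B)) p := by
    by_cases hp : p = ∞
    · subst hp
      rw [MDU.weakType_top, MDU.weakType_top, MDU.weakType_top]
      exact strong_nc
    · rw [MDU.weakType_ne_top hp, MDU.weakType_ne_top hp, MDU.weakType_ne_top hp]
      constructor
      · exact fun h => ⟨MDU.fwd_weak hA h1n h4An hp1 hp h, MDU.fwd_weak hB h1n h4Bn hp1 hp h⟩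
      · exact fun h => MDU.bwd_weak hA hB hdisj hcover h2An h2Bn h3An h3Bn hp1 hp h.1 h.2
  have weak_cen : IsWeakType μ (cenMax μ) p ↔
      IsWeakType (subMeasure μ A) (cenMax (subMeasure μ A)) p ∧
      IsWeakType (subMeasure μ B) (cenMax (subMeasure μ B)) p := by
    by_cases hp : p = ∞
    · subst hp
      rw [MDU.weakType_top, MDU.weakType_top, MDU.weakType_top]
      exact strong_cen
    · rw [MDU.weakType_ne_top hp, MDU.weakType_ne_top hp, MDU.weakType_ne_top hp]
      constructor
      · exact fun h => ⟨MDU.fwd_weak hA h1c h4Ac hp1 hp h, MDU.fwd_weak hB h1c h4Bc hp1 hp h⟩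
      · exact fun h => MDU.bwd_weak hA hB hdisj hcover h2Ac h2Bc h3Ac h3Bc hp1 hp h.1 h.2
  exact ⟨strong_nc, weak_nc, strong_cen, weak_cen⟩
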